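/- Let n ∈ ℕ, let φ be a Borel-measurable bijection from [0,n)^d onto [0,1) with Borel-measurable inverse, let μ be a diffuse (atomless) probability measure on [0,n)^d, let F_μ(x) := μ(φ ≤ x), and let F_μ^{-1} be a (left- or right-continuous) generalized inverse of F_μ. For r ∈ [0,1), define ψ_r^μ : [0,n)^d → [0,n)^d by ψ_r^μ := φ^{-1}(F_μ^{-1}(F_μ(φ(·)) + r mod 1)). Then the pushforward of μ under ψ_r^μ equals μ. -/

import Mathlib

open MeasureTheory ENNReal Set

namespace LT

/-- Points of `ℝ^d`. -/
abbrev Rd (d : ℕ) := Fin d → ℝ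

/-- Points of `ℤ^d`. -/
abbrev ZZd (d : ℕ) := Fin d → ℤ

/-- The shift `θ_t ξ`, satisfying `θ_t ξ (B) = ξ (B + t)`. -/
noncomputable def shiftM {d : ℕ} (t : Rd d) (ξ : Measure (Rd d)) : Measure (Rd d) :=
  Measure.map (fun x => x - t) ξ

/-- A (jointly) measurable action of the additive group `ℝ^d` on a measurable space `E`,
written `θ_t x = act t x`. -/
structure Action (d : ℕ) (E : Type*) [MeasurableSpace E] where
  act : Rd d → E → E
  measurable_act : ∀ t, Measurable (act t)
  act_zero : ∀ x, act 0 x = x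
  act_add : ∀ s t x, act s (act t x) = act (s + t) x

/-- The conditional (normalized) measure `ξ(· | A)`. -/
noncomputable def condM {d : ℕ} (ξ : Measure (Rd d)) (A : Set (Rd d)) : Measure (Rd d) :=
  (ξ A)⁻¹ • ξ.restrict A

/-- `0` lies in the support of `ξ`. -/
def zeroInSupport {d : ℕ} (ξ : Measure (Rd d)) : Prop :=
  ∀ U : Set (Rd d), IsOpen U → (0 : Rd d) ∈ U → 0 < ξ U

variable {d : ℕ} {Ω E : Type*} [MeasurableSpace Ω] [MeasurableSpace E]

/-- The defining identity (1) of mass-stationarity for a fixed set `C` :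
`(θ_{V_C}(X,ξ), V_C + U_C) =_D ((X,ξ), U_C)`, where the conditional distribution of `U_C`
given `(X,ξ)` is uniform on `C` and that of `V_C` given `((X,ξ),U_C)` is `ξ(· | C - U_C)`. -/
def MSIdentity (Θ : Action d E) (P : Measure Ω) (X : Ω → E) (ξ : Ω → Measure (Rd d))
    (C : Set (Rd d)) : Prop :=
  ∀ f : (E × Measure (Rd d)) × Rd d → ℝ≥0∞, Measurable f →
    ∫⁻ ω, (volume C)⁻¹ * ∫⁻ u in C,
        ∫⁻ v, f ((Θ.act v (X ω), shiftM v (ξ ω)), v + u)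
          ∂(condM (ξ ω) ((· + u) ⁻¹' C)) ∂volume ∂P
    = ∫⁻ ω, (volume C)⁻¹ * ∫⁻ u in C, f ((X ω, ξ ω), u) ∂volume ∂P

/-- Mass-stationarity of `(X, ξ)` under `P`. -/
def IsMassStationary (Θ : Action d E) (P : Measure Ω) (X : Ω → E)
    (ξ : Ω → Measure (Rd d)) : Prop :=
  ∀ C : Set (Rd d), MeasurableSet C → Bornology.IsBounded C → 0 < volume C →
    volume (frontier C) = 0 → MSIdentity Θ P X ξ C

/-- Stationarity of the pair `(X, ξ)` under `P`. -/
def IsStationary (Θ : Action d E) (P : Measure Ω) (X : Ω → E)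
    (ξ : Ω → Measure (Rd d)) : Prop :=
  ∀ t : Rd d, Measure.map (fun ω => (Θ.act t (X ω), shiftM t (ξ ω))) P
    = Measure.map (fun ω => (X ω, ξ ω)) P

/-- Stationarity of a random element `X` under `P`. -/
def IsStationaryElem (Θ : Action d E) (P : Measure Ω) (X : Ω → E) : Prop :=
  ∀ t : Rd d, Measure.map (fun ω => Θ.act t (X ω)) P = Measure.map X P

/-- `(Xc, ξc)` under `Pc` is the Palm version of the (stationary) pair `(X, ξ)` under `P`. -/
def IsPalmVersion {Ω' : Type*} [MeasurableSpace Ω']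
    (Θ : Action d E) (Pc : Measure Ω) (Xc : Ω → E) (ξc : Ω → Measure (Rd d))
    (P : Measure Ω') (X : Ω' → E) (ξ : Ω' → Measure (Rd d)) : Prop :=
  ∀ f : E × Measure (Rd d) → ℝ≥0∞, Measurable f →
    ∀ B : Set (Rd d), MeasurableSet B → 0 < volume B → volume B < ⊤ →
      ∫⁻ ω, f (Xc ω, ξc ω) ∂Pc
        = (volume B)⁻¹ * ∫⁻ ω, ∫⁻ t in B, f (Θ.act t (X ω), shiftM t (ξ ω)) ∂(ξ ω) ∂P

end LT
namespace LT

/-- Lexicographic order on `ℤ^d` (with the index order of `Fin d`). -/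
def lexLE {d : ℕ} (a b : ZZd d) : Prop :=
  a = b ∨ ∃ k : Fin d, a k < b k ∧ ∀ l, l < k → a l = b l

/-- The half-open unit cube `i + [0,1)^d` based at `i ∈ ℤ^d`. -/
def cube {d : ℕ} (i : ZZd d) : Set (Rd d) :=
  {x | ∀ k, (i k : ℝ) ≤ x k ∧ x k < (i k : ℝ) + 1}

/-- The half-open box `[0,n)^d`. -/
def boxN (d n : ℕ) : Set (Rd d) := {x | ∀ k, 0 ≤ x k ∧ x k < (n : ℝ)}

/-- The half-open unit box `[0,1)^d`. -/
def box01 (d : ℕ) : Set (Rd d) := boxN d 1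

/-- The simple point process on `ℤ^d` having a point at `i` iff `ξ(i + [0,1)^d) > 0`. -/
def Npts {d : ℕ} (ξ : Measure (Rd d)) : Set (ZZd d) := {i | 0 < ξ (cube i)}

/-- Squared Euclidean distance on `ℤ^d`. -/
def sqdist {d : ℕ} (i j : ZZd d) : ℤ := ∑ k, (i k - j k) ^ 2

open Classical in
/-- The point of `N ⊆ ℤ^d` closest to `i`, the lexicographically lowest one in case of
ties (junk value `i` if no such point exists, e.g. if `N = ∅`). -/
noncomputable def voronoiCenter {d : ℕ} (N : Set (ZZd d)) (i : ZZd d) : ZZd d :=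
  if h : ∃ j, j ∈ N ∧ (∀ j' ∈ N, sqdist i j ≤ sqdist i j') ∧
      (∀ j' ∈ N, sqdist i j' = sqdist i j → lexLE j j') then h.choose else i

/-- The Voronoi cell (w.r.t. `N`) containing the origin of `ℤ^d`: the set `D`. -/
def Dcell {d : ℕ} (N : Set (ZZd d)) : Set (ZZd d) :=
  {i | voronoiCenter N i = voronoiCenter N 0}

/-- The vector `S = S_0` from the `N`-point of the cell of `0` to `0`. -/
noncomputable def Svec {d : ℕ} (N : Set (ZZd d)) : ZZd d := -(voronoiCenter N 0)

/-- The set `D° = S + D`. -/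
noncomputable def Dc {d : ℕ} (N : Set (ZZd d)) : Set (ZZd d) :=
  (fun i => Svec N + i) '' Dcell N

/-- Embedding `ℤ^d → ℝ^d`. -/
def toRd {d : ℕ} (i : ZZd d) : Rd d := fun k => (i k : ℝ)

/-- The support of a measure on `ℝ^d`. -/
def msupport {d : ℕ} (ξ : Measure (Rd d)) : Set (Rd d) :=
  {x | ∀ U : Set (Rd d), IsOpen U → x ∈ U → 0 < ξ U}

end LT
namespace LT

/-- The distribution function `F_μ(x) = μ(φ ≤ x)` of the pushforward `P_μ` of `μ`
under `φ`. -/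
noncomputable def cdf {d : ℕ} (μ : Measure (Rd d)) (φ : Rd d → ℝ) (x : ℝ) : ℝ :=
  (μ (φ ⁻¹' Set.Iic x)).toReal

/-- The (right-continuous) generalized inverse `F_μ⁻¹(v) = inf {x : F_μ(x) ≥ v}`. -/
noncomputable def cdfInv {d : ℕ} (μ : Measure (Rd d)) (φ : Rd d → ℝ) (v : ℝ) : ℝ :=
  sInf {x : ℝ | v ≤ cdf μ φ x}

/-- The map `ψ_r^μ = φ⁻¹(F_μ⁻¹(F_μ(φ(·)) + r mod 1))` of `[0,n)^d` to itself. -/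
noncomputable def psiMap {d : ℕ} (μ : Measure (Rd d)) (φ : Rd d → ℝ) (ψ : ℝ → Rd d)
    (r : ℝ) (s : Rd d) : Rd d :=
  ψ (cdfInv μ φ (Int.fract (cdf μ φ (φ s) + r)))

end LT
namespace LT

/-- **Example 1, second part.** With `φ`, `μ`, `F_μ`, `F_μ⁻¹` as before and `r ∈ [0,1)`,
the map `ψ_r^μ = φ⁻¹(F_μ⁻¹(F_μ(φ(·)) + r mod 1))` pushes `μ` forward to itself. -/
theorem psiMap_measure_preserving
    {d n : ℕ} (hn : 0 < n) (φ : Rd d → ℝ) (ψ : ℝ → Rd d)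
    (hφ : Measurable φ) (hψ : Measurable ψ)
    (hbij : Set.BijOn φ (boxN d n) (Set.Ico (0 : ℝ) 1))
    (hinv : Set.InvOn ψ φ (boxN d n) (Set.Ico (0 : ℝ) 1))
    (μ : Measure (Rd d)) [IsProbabilityMeasure μ]
    (hconc : μ (boxN d n)ᶜ = 0)
    (hdiffuse : ∀ s, μ {s} = 0)
    (r : ℝ) (hr : r ∈ Set.Ico (0 : ℝ) 1) :
    Measure.map (psiMap μ φ ψ r) μ = μ := by
  classical
  haveI : NullSingletonClass μ := ⟨hdiffuse⟩
  set F : ℝ → ℝ := cdf μ φ with hFdef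
  set Finv : ℝ → ℝ := cdfInv μ φ with hFinvdef
  set g : ℝ → ℝ := fun v => Int.fract (v + r) with hgdef
  set P : Measure ℝ := μ.map φ with hPdef
  set U : Measure ℝ := volume.restrict (Ico (0 : ℝ) 1) with hUdef
  haveI : IsProbabilityMeasure P := Measure.isProbabilityMeasure_map hφ.aemeasurable
  -- basic facts about μ and P
  have hbox1 : μ (boxN d n) = 1 := by
    refine le_antisymm prob_le_one ?_
    calc (1 : ℝ≥0∞) = μ univ := measure_univ.symm
      _ = μ (boxN d n ∪ (boxN d n)ᶜ) := by rw [union_compl_self]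
      _ ≤ μ (boxN d n) + μ (boxN d n)ᶜ := measure_union_le _ _
      _ = μ (boxN d n) := by rw [hconc, add_zero]
  have hIco1 : P (Ico (0 : ℝ) 1) = 1 := by
    rw [hPdef, Measure.map_apply hφ measurableSet_Ico]
    refine le_antisymm prob_le_one ?_
    calc (1 : ℝ≥0∞) = μ (boxN d n) := hbox1.symm
      _ ≤ μ (φ ⁻¹' Ico 0 1) := measure_mono fun x hx => hbij.mapsTo hx
  have hIcoC : P ((Ico (0 : ℝ) 1)ᶜ) = 0 :=
    (prob_compl_eq_zero_iff measurableSet_Ico).2 hIco1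
  have hPatom : ∀ y : ℝ, P {y} = 0 := by
    intro y
    rw [hPdef, Measure.map_apply hφ (measurableSet_singleton y)]
    have hsub : Set.Subsingleton (φ ⁻¹' {y} ∩ boxN d n) := by
      intro a ha b hb
      exact hbij.injOn ha.2 hb.2 (ha.1.trans hb.1.symm)
    calc μ (φ ⁻¹' {y}) = μ (φ ⁻¹' {y} ∩ boxN d n) := (measure_inter_conull hconc).symm
      _ = 0 := hsub.measure_zero μ
  haveI : NoAtoms P := ⟨hPatom⟩
  -- the cdf F
  have hFx : ∀ x : ℝ, F x = (P (Iic x)).toReal := by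
    intro x
    rw [hFdef, hPdef, Measure.map_apply hφ measurableSet_Iic]
    rfl
  have hF0le : ∀ x, 0 ≤ F x := fun x => by rw [hFx]; exact ENNReal.toReal_nonneg
  have hFle1 : ∀ x, F x ≤ 1 := by
    intro x
    rw [hFx]
    calc (P (Iic x)).toReal ≤ (1 : ℝ≥0∞).toReal :=
          ENNReal.toReal_mono one_ne_top prob_le_one
      _ = 1 := by simp
  have hFmono : Monotone F := by
    intro a b hab
    rw [hFx, hFx]
    exact ENNReal.toReal_mono (measure_ne_top P _) (measure_mono (Iic_subset_Iic.2 hab))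
  have hFneg : ∀ x : ℝ, x < 0 → F x = 0 := by
    intro x hx
    rw [hFx]
    have : P (Iic x) = 0 := by
      refine le_antisymm ?_ (by simp)
      rw [← hIcoC]
      refine measure_mono fun y hy => ?_
      simp only [mem_compl_iff, mem_Ico, not_and, not_lt]
      intro h0
      have hy' := mem_Iic.1 hy
      linarith
    simp [this]
  have hF1 : F 1 = 1 := by
    rw [hFx]
    have : P (Iic 1) = 1 := by
      refine le_antisymm prob_le_one ?_
      rw [← hIco1]
      exact measure_mono fun y hy => hy.2.le
    simp [this]
  have hPIic : ∀ x : ℝ, P (Iic x) = ENNReal.ofReal (F x) := by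
    intro x
    rw [hFx, ENNReal.ofReal_toReal (measure_ne_top P _)]
  -- continuity of F
  have hFcont : Continuous F := by
    have heq : F = fun x => ProbabilityTheory.cdf P x := by
      funext x
      rw [hFx x, ProbabilityTheory.cdf_eq_real, Measure.real]
    rw [heq]
    have hmono := (ProbabilityTheory.cdf P).mono
    refine continuous_iff_continuousAt.2 fun x => ?_
    rw [hmono.continuousAt_iff_leftLim_eq_rightLim]
    have hsing : (ProbabilityTheory.cdf P).measure {x} = 0 := by
      rw [ProbabilityTheory.measure_cdf]; exact hPatom x
    rw [StieltjesFunction.measure_singleton, ENNReal.ofReal_eq_zero] at hsing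
    have hL : Function.leftLim (⇑(ProbabilityTheory.cdf P)) x = ProbabilityTheory.cdf P x :=
      le_antisymm (hmono.leftLim_le le_rfl) (by linarith)
    have hR : Function.rightLim (⇑(ProbabilityTheory.cdf P)) x = ProbabilityTheory.cdf P x :=
      hmono.continuousWithinAt_Ioi_iff_rightLim_eq.1
        (((ProbabilityTheory.cdf P).right_continuous x).mono Ioi_subset_Ici_self)
    rw [hL, hR]
  have hFmeas : Measurable F := hFmono.measurable
  -- F pushes P to the uniform distribution on [0,1)
  have huniform : ∀ t ∈ Ico (0 : ℝ) 1, P {x | F x ≤ t} = ENNReal.ofReal t := by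
    intro t ht
    have hSclosed : IsClosed {x | F x ≤ t} := isClosed_le hFcont continuous_const
    have hne : Set.Nonempty {x | F x ≤ t} := ⟨-1, by
      simp only [mem_setOf_eq, hFneg (-1) (by norm_num)]; exact ht.1⟩
    have hbdd : BddAbove {x | F x ≤ t} := by
      refine ⟨1, fun y hy => ?_⟩
      by_contra hy1
      push_neg at hy1
      have := hFmono hy1.le
      rw [hF1] at this
      exact absurd (le_trans this hy) (not_le.2 ht.2)
    set x0 := sSup {x | F x ≤ t} with hx0def
    have hx0S : x0 ∈ {x | F x ≤ t} := hSclosed.csSup_mem hne hbdd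
    have hx0le1 : x0 ≤ 1 := by
      refine csSup_le hne fun y hy => ?_
      by_contra hy1
      push_neg at hy1
      have := hFmono hy1.le
      rw [hF1] at this
      exact absurd (le_trans this hy) (not_le.2 ht.2)
    have hFx0 : F x0 = t := by
      have hmem : t ∈ Icc (F x0) (F 1) := ⟨hx0S, by rw [hF1]; exact ht.2.le⟩
      obtain ⟨y, hy, hFy⟩ := intermediate_value_Icc hx0le1 hFcont.continuousOn hmem
      have hyS : y ∈ {x | F x ≤ t} := by simp [hFy.le]
      have : y = x0 := le_antisymm (le_csSup hbdd hyS) hy.1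
      rw [← this, hFy]
    have hSIic : {x | F x ≤ t} = Iic x0 := by
      refine subset_antisymm (fun y hy => le_csSup hbdd hy) (fun y hy => ?_)
      exact le_trans (hFmono hy) hx0S
    rw [hSIic, hPIic, hFx0]
  -- generalized inverse: characterization on (0,1)
  have hFinv_eq : ∀ v : ℝ, Finv v = sInf {x | v ≤ F x} := fun v => rfl
  have hbddBelow : ∀ v : ℝ, 0 < v → BddBelow {x | v ≤ F x} := by
    intro v hv
    refine ⟨0, fun y hy => ?_⟩
    by_contra hy0
    push_neg at hy0
    rw [mem_setOf_eq, hFneg y hy0] at hy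
    exact absurd (lt_of_lt_of_le hv hy) (lt_irrefl 0)
  have hne1 : ∀ v : ℝ, v ≤ 1 → (1 : ℝ) ∈ {x | v ≤ F x} := by
    intro v hv
    rw [mem_setOf_eq, hF1]; exact hv
  have hinv_le : ∀ v ∈ Ioo (0 : ℝ) 1, ∀ x : ℝ, (Finv v ≤ x ↔ v ≤ F x) := by
    intro v hv x
    constructor
    · intro hle
      have hSclosed : IsClosed {x | v ≤ F x} := isClosed_le continuous_const hFcont
      have hmem : Finv v ∈ {x | v ≤ F x} := by
        rw [hFinv_eq]
        exact hSclosed.csInf_mem ⟨1, hne1 v hv.2.le⟩ (hbddBelow v hv.1)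
      exact le_trans hmem (hFmono hle)
    · intro hvF
      rw [hFinv_eq]
      exact csInf_le (hbddBelow v hv.1) hvF
  -- measurability of Finv
  have hFinv_meas : Measurable Finv := by
    have hnn : ∀ v : ℝ, 0 < v → 0 ≤ sInf {x | v ≤ F x} := by
      intro v hv
      refine Real.sInf_nonneg fun y hy => ?_
      by_contra hy0
      push_neg at hy0
      rw [mem_setOf_eq, hFneg y hy0] at hy
      exact absurd (lt_of_lt_of_le hv hy) (lt_irrefl 0)
    have huniv : ∀ v : ℝ, v ≤ 0 → sInf {x | v ≤ F x} = 0 := by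
      intro v hv
      have : {x | v ≤ F x} = univ := eq_univ_of_forall fun x => le_trans hv (hF0le x)
      rw [this]
      exact Real.sInf_of_not_bddBelow fun ⟨c, hc⟩ => by
        have h1 := hc (mem_univ (c - 1))
        linarith
    have hmin_mono : Monotone (fun v : ℝ => sInf {x | min v 1 ≤ F x}) := by
      intro a b hab
      dsimp only
      rcases le_or_gt (min b 1) 0 with hb0 | hb0
      · have ha0 : min a 1 ≤ 0 := le_trans (min_le_min hab le_rfl) hb0
        rw [huniv _ ha0, huniv _ hb0]
      rcases le_or_gt (min a 1) 0 with ha0 | ha0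
      · rw [huniv _ ha0]
        exact hnn _ hb0
      · refine csInf_le_csInf (hbddBelow _ ha0) ⟨1, hne1 _ (min_le_right _ _)⟩ ?_
        intro x hx
        exact le_trans (min_le_min hab le_rfl) hx
    have hpiece : Finv = (Iic (1 : ℝ)).piecewise
        (fun v : ℝ => sInf {x | min v 1 ≤ F x}) (fun _ => 0) := by
      funext v
      rcases le_or_gt v 1 with hv | hv
      · rw [Set.piecewise_eq_of_mem _ _ _ (mem_Iic.2 hv), hFinv_eq]
        congr 2
        ext x
        simp [min_eq_left hv]
      · rw [Set.piecewise_eq_of_notMem _ _ _ (by simpa using hv), hFinv_eq]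
        have : {x | v ≤ F x} = (∅ : Set ℝ) := by
          refine eq_empty_of_forall_notMem fun x hx => ?_
          exact absurd (lt_of_le_of_lt (le_trans hx (hFle1 x)) hv) (lt_irrefl v)
        rw [this, Real.sInf_empty]
    rw [hpiece]
    exact Measurable.piecewise measurableSet_Iic hmin_mono.measurable measurable_const
  -- measurability of g
  have hg_meas : Measurable g := (measurable_id.add_const r).fract
  -- Step A : F pushes P to U
  have stepA : P.map F = U := by
    haveI : IsProbabilityMeasure (P.map F) := Measure.isProbabilityMeasure_map hFmeas.aemeasurable
    refine Measure.ext_of_Iic (P.map F) U fun t => ?_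
    rw [Measure.map_apply hFmeas measurableSet_Iic, hUdef,
      Measure.restrict_apply measurableSet_Iic]
    rcases lt_or_ge t 0 with ht | ht
    · have h1 : F ⁻¹' Iic t = ∅ := by
        refine eq_empty_of_forall_notMem fun x hx => ?_
        exact absurd (lt_of_le_of_lt (le_trans (hF0le x) hx) ht) (lt_irrefl 0)
      have h2 : Iic t ∩ Ico (0 : ℝ) 1 = ∅ := by
        refine eq_empty_of_forall_notMem fun v hv => ?_
        rcases hv with ⟨hv1, hv2, _⟩
        exact absurd (lt_of_le_of_lt (le_trans hv2 hv1) ht) (lt_irrefl 0)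
      rw [h1, h2]
      simp
    rcases lt_or_ge t 1 with ht1 | ht1
    · have h1 : F ⁻¹' Iic t = {x | F x ≤ t} := rfl
      have h2 : Iic t ∩ Ico (0 : ℝ) 1 = Icc 0 t := by
        ext v
        simp only [mem_inter_iff, mem_Iic, mem_Ico, mem_Icc]
        constructor
        · rintro ⟨hv1, hv2, _⟩; exact ⟨hv2, hv1⟩
        · rintro ⟨hv1, hv2⟩; exact ⟨hv2, hv1, lt_of_le_of_lt hv2 ht1⟩
      rw [h1, h2, huniform t ⟨ht, ht1⟩, Real.volume_Icc, sub_zero]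
    · have h1 : F ⁻¹' Iic t = univ :=
        eq_univ_of_forall fun x => mem_Iic.2 (le_trans (hFle1 x) ht1)
      have h2 : Iic t ∩ Ico (0 : ℝ) 1 = Ico 0 1 :=
        inter_eq_self_of_subset_right fun v hv => le_trans hv.2.le ht1
      rw [h1, h2, Real.volume_Ico, sub_zero, ENNReal.ofReal_one, measure_univ]
  -- Step B : rotation by r preserves U
  have stepB : U.map g = U := by
    have hsub1 : (0 : ℝ) ≤ 1 - r := by linarith [hr.2]
    have hsub2 : (1 : ℝ) - r ≤ 1 := by linarith [hr.1]
    have hmp : MeasurePreserving (fun v : ℝ => v + r) volume volume :=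
      measurePreserving_add_right volume r
    have hmp' : MeasurePreserving (fun v : ℝ => v + (r - 1)) volume volume :=
      measurePreserving_add_right volume (r - 1)
    have hpre1 : (fun v : ℝ => v + r) ⁻¹' Ico r 1 = Ico 0 (1 - r) := by
      ext v
      simp only [mem_preimage, mem_Ico]
      constructor
      · rintro ⟨h1, h2⟩; exact ⟨by linarith, by linarith⟩
      · rintro ⟨h1, h2⟩; exact ⟨by linarith, by linarith⟩
    have hpre2 : (fun v : ℝ => v + (r - 1)) ⁻¹' Ico 0 r = Ico (1 - r) 1 := by
      ext v
      simp only [mem_preimage, mem_Ico]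
      constructor
      · rintro ⟨h1, h2⟩; exact ⟨by linarith, by linarith⟩
      · rintro ⟨h1, h2⟩; exact ⟨by linarith, by linarith⟩
    have hP1 : (volume.restrict (Ico (0 : ℝ) (1 - r))).map g = volume.restrict (Ico r 1) := by
      have h1 : (volume.restrict (Ico (0 : ℝ) (1 - r))).map g
          = (volume.restrict (Ico (0 : ℝ) (1 - r))).map (fun v => v + r) := by
        apply Measure.map_congr
        filter_upwards [ae_restrict_mem measurableSet_Ico] with v hv
        exact Int.fract_eq_self.2 ⟨by linarith [hv.1, hr.1], by linarith [hv.2]⟩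
      rw [h1, ← hpre1]
      exact (hmp.restrict_preimage measurableSet_Ico).map_eq
    have hP2 : (volume.restrict (Ico (1 - r) (1 : ℝ))).map g = volume.restrict (Ico 0 r) := by
      have h1 : (volume.restrict (Ico (1 - r) (1 : ℝ))).map g
          = (volume.restrict (Ico (1 - r) (1 : ℝ))).map (fun v => v + (r - 1)) := by
        apply Measure.map_congr
        filter_upwards [ae_restrict_mem measurableSet_Ico] with v hv
        have harg : v + r = v + (r - 1) + (1 : ℤ) := by push_cast; ring
        rw [hgdef]
        show Int.fract (v + r) = v + (r - 1)
        rw [harg, Int.fract_add_intCast]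
        exact Int.fract_eq_self.2 ⟨by linarith [hv.1], by linarith [hv.2, hr.2]⟩
      rw [h1, ← hpre2]
      exact (hmp'.restrict_preimage measurableSet_Ico).map_eq
    have hsplit : U = volume.restrict (Ico (0 : ℝ) (1 - r)) + volume.restrict (Ico (1 - r) 1) := by
      rw [hUdef, ← Measure.restrict_union (Ico_disjoint_Ico_same) measurableSet_Ico,
        Ico_union_Ico_eq_Ico hsub1 hsub2]
    calc U.map g = (volume.restrict (Ico (0 : ℝ) (1 - r))).map g
          + (volume.restrict (Ico (1 - r) (1 : ℝ))).map g := by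
          rw [hsplit, Measure.map_add _ _ hg_meas]
      _ = volume.restrict (Ico r 1) + volume.restrict (Ico 0 r) := by rw [hP1, hP2]
      _ = U := by
          rw [add_comm, ← Measure.restrict_union (Ico_disjoint_Ico_same)
            measurableSet_Ico, Ico_union_Ico_eq_Ico hr.1 hr.2.le, hUdef]
  -- Step C : Finv pushes U to P
  have stepC : U.map Finv = P := by
    haveI : IsProbabilityMeasure U := ⟨by
      rw [hUdef, Measure.restrict_apply_univ, Real.volume_Ico, sub_zero, ENNReal.ofReal_one]⟩
    haveI : IsProbabilityMeasure (U.map Finv) := Measure.isProbabilityMeasure_map hFinv_meas.aemeasurable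
    refine Measure.ext_of_Iic (U.map Finv) P fun x => ?_
    rw [Measure.map_apply hFinv_meas measurableSet_Iic, hUdef,
      Measure.restrict_apply (hFinv_meas measurableSet_Iic)]
    have hae : (Finv ⁻¹' Iic x ∩ Ico (0 : ℝ) 1 : Set ℝ) =ᵐ[volume]
        (Iic (F x) ∩ Ico (0 : ℝ) 1 : Set ℝ) := by
      rw [Filter.eventuallyEq_set]
      have hdiff : ∀ v : ℝ, v ≠ 0 →
          (v ∈ Finv ⁻¹' Iic x ∩ Ico (0 : ℝ) 1 ↔ v ∈ Iic (F x) ∩ Ico (0 : ℝ) 1) := by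
        intro v hv0
        constructor
        · rintro ⟨h1, h2⟩
          have hv : v ∈ Ioo (0 : ℝ) 1 := ⟨lt_of_le_of_ne h2.1 (Ne.symm hv0), h2.2⟩
          exact ⟨(hinv_le v hv x).1 h1, h2⟩
        · rintro ⟨h1, h2⟩
          have hv : v ∈ Ioo (0 : ℝ) 1 := ⟨lt_of_le_of_ne h2.1 (Ne.symm hv0), h2.2⟩
          exact ⟨(hinv_le v hv x).2 h1, h2⟩
      have : {v : ℝ | ¬(v ∈ Finv ⁻¹' Iic x ∩ Ico (0 : ℝ) 1 ↔
          v ∈ Iic (F x) ∩ Ico (0 : ℝ) 1)} ⊆ {(0 : ℝ)} := by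
        intro v hv
        by_contra hv0
        exact hv (hdiff v (by simpa using hv0))
      rw [ae_iff]
      exact measure_mono_null this Real.volume_singleton
    rw [measure_congr hae, hPIic]
    have h0 : 0 ≤ F x := hF0le x
    have h1 : F x ≤ 1 := hFle1 x
    refine le_antisymm ?_ ?_
    · calc volume (Iic (F x) ∩ Ico (0 : ℝ) 1) ≤ volume (Icc 0 (F x)) := by
            refine measure_mono fun v hv => ⟨hv.2.1, hv.1⟩
        _ = ENNReal.ofReal (F x) := by rw [Real.volume_Icc, sub_zero]
    · calc ENNReal.ofReal (F x) = volume (Ico 0 (F x)) := by rw [Real.volume_Ico, sub_zero]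
        _ ≤ volume (Iic (F x) ∩ Ico (0 : ℝ) 1) := by
            refine measure_mono fun v hv => ⟨hv.2.le, hv.1, lt_of_lt_of_le hv.2 h1⟩
  -- Step D : ψ pushes P to μ
  have stepD : P.map ψ = μ := by
    refine Measure.ext fun A hA => ?_
    rw [Measure.map_apply hψ hA, hPdef, Measure.map_apply hφ (hψ hA)]
    have h2 : φ ⁻¹' (ψ ⁻¹' A) ∩ boxN d n = A ∩ boxN d n := by
      ext s
      simp only [mem_inter_iff, mem_preimage, and_congr_left_iff]
      intro hs
      rw [hinv.1 hs]
    calc μ (φ ⁻¹' (ψ ⁻¹' A)) = μ (φ ⁻¹' (ψ ⁻¹' A) ∩ boxN d n) :=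
          (measure_inter_conull hconc).symm
      _ = μ (A ∩ boxN d n) := by rw [h2]
      _ = μ A := measure_inter_conull hconc
  -- assemble
  have hcomp : ((((μ.map φ).map F).map g).map Finv).map ψ = Measure.map (psiMap μ φ ψ r) μ := by
    rw [Measure.map_map hFmeas hφ, Measure.map_map hg_meas (hFmeas.comp hφ),
      Measure.map_map hFinv_meas (hg_meas.comp (hFmeas.comp hφ)),
      Measure.map_map hψ (hFinv_meas.comp (hg_meas.comp (hFmeas.comp hφ)))]
    rfl
  rw [← hcomp, ← hPdef, stepA, stepB, stepC, stepD]

end LT
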